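/- For every positive integer m, the lettericity of the co-matching, i.e., the complement of the perfect matching mK₂, is exactly m: ℓ((mK₂)ᶜ) = m. In particular, the family of co-matchings has unbounded lettericity. -/

import Mathlib

/-- A `k`-lettering of a graph `G`: a decoder `D ⊆ Fin k × Fin k`, a letter
assignment `L`, and an injective ordering `ord` such that for `ord u < ord v`,
`u` and `v` are adjacent iff `(L u, L v) ∈ D`. -/
def HasLettering {V : Type*} (G : SimpleGraph V) (k : ℕ) : Prop :=
  ∃ (D : Set (Fin k × Fin k)) (L : V → Fin k) (ord : V → ℕ),
    Function.Injective ord ∧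
    ∀ u v : V, u ≠ v → ord u < ord v → (G.Adj u v ↔ (L u, L v) ∈ D)

/-- The lettericity of a graph: the least `k` such that it has a `k`-lettering. -/
noncomputable def lettericity {V : Type*} (G : SimpleGraph V) : ℕ :=
  sInf {k | HasLettering G k}

/-- The matching `mK₂`: the disjoint union of `m` single edges. -/
def matchingGraph (m : ℕ) : SimpleGraph (Fin m × Fin 2) where
  Adj a b := a.1 = b.1 ∧ a.2 ≠ b.2
  symm := ⟨by rintro a b ⟨h1, h2⟩; exact ⟨h1.symm, h2.symm⟩⟩
  loopless := ⟨by rintro a ⟨h1, h2⟩; exact h2 rfl⟩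

lemma comatching_upper (m : ℕ) : HasLettering (matchingGraph m)ᶜ m := by
  refine ⟨{p | p.1 ≠ p.2}, Prod.fst,
    fun a => ((Fintype.equivFin (Fin m × Fin 2)) a : ℕ),
    Fin.val_injective.comp (Fintype.equivFin _).injective, ?_⟩
  intro a b hne _
  rw [SimpleGraph.compl_adj]
  show (a ≠ b ∧ ¬ (matchingGraph m).Adj a b) ↔ a.1 ≠ b.1
  constructor
  · rintro ⟨-, hnadj⟩ heq
    exact hnadj ⟨heq, fun h2 => hne (Prod.ext heq h2)⟩
  · intro h1
    exact ⟨hne, fun hadj => h1 hadj.1⟩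

lemma no_small_lettering (m k : ℕ) (hk : k < m) :
    ¬ HasLettering (matchingGraph m)ᶜ k := by
  rintro ⟨D, L, ord, hinj, h⟩
  -- for each pair `i`, `u i` is the vertex placed earlier, `w i` the later one
  set u : Fin m → Fin m × Fin 2 := fun i =>
    if ord (i, 0) < ord (i, 1) then (i, 0) else (i, 1) with hu
  set w : Fin m → Fin m × Fin 2 := fun i =>
    if ord (i, 0) < ord (i, 1) then (i, 1) else (i, 0) with hw
  have hufst : ∀ i, (u i).1 = i := by intro i; simp only [hu]; split <;> rfl
  have hwfst : ∀ i, (w i).1 = i := by intro i; simp only [hw]; split <;> rfl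
  have huw : ∀ i, ord (u i) < ord (w i) := by
    intro i
    simp only [hu, hw]
    split
    · assumption
    · rcases lt_or_eq_of_le (not_lt.1 (by assumption)) with h1 | h1
      · exact h1
      · exact absurd (hinj h1) (by simp)
  have key : ∀ i j : Fin m, i ≠ j → L (u i) = L (u j) →
      ord (w i) < ord (w j) → False := by
    intro i j hij hL hlt
    have hne1 : u i ≠ w j := fun hE => hij (by rw [← hufst i, hE, hwfst])
    have hne2 : u j ≠ w j := fun hE => absurd (congrArg ord hE) (huw j).ne
    have hadj1 : (matchingGraph m)ᶜ.Adj (u i) (w j) := by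
      rw [SimpleGraph.compl_adj]
      exact ⟨hne1, fun hadj => hij (by rw [← hufst i, hadj.1, hwfst])⟩
    have hnadj2 : ¬ (matchingGraph m)ᶜ.Adj (u j) (w j) := by
      rw [SimpleGraph.compl_adj]
      rintro ⟨hne, hn⟩
      refine hn ⟨(hufst j).trans (hwfst j).symm, fun h2 => hne ?_⟩
      exact Prod.ext ((hufst j).trans (hwfst j).symm) h2
    have hD1 : (L (u i), L (w j)) ∈ D :=
      (h _ _ hne1 ((huw i).trans hlt)).1 hadj1
    have hD2 : (L (u j), L (w j)) ∉ D :=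
      fun hmem => hnadj2 ((h _ _ hne2 (huw j)).2 hmem)
    exact hD2 (hL ▸ hD1)
  obtain ⟨i, j, hij, hL⟩ := Fintype.exists_ne_map_eq_of_card_lt
    (fun i : Fin m => L (u i)) (by simpa using hk)
  have hwne : w i ≠ w j := fun hE => hij (by rw [← hwfst i, hE, hwfst])
  rcases lt_or_gt_of_ne (fun hE => hwne (hinj hE)) with hlt | hlt
  · exact key i j hij hL hlt
  · exact key j i hij.symm hL.symm hlt

theorem lettericity_co_matching :
    (∀ m : ℕ, 0 < m → lettericity (matchingGraph m)ᶜ = m) ∧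
      ∀ k : ℕ, ∃ m : ℕ, 0 < m ∧ ¬ HasLettering (matchingGraph m)ᶜ k := by
  constructor
  · intro m _
    have hub : m ∈ {k | HasLettering (matchingGraph m)ᶜ k} := comatching_upper m
    refine le_antisymm (Nat.sInf_le hub) ?_
    by_contra hlt
    push_neg at hlt
    exact no_small_lettering m _ hlt (Nat.sInf_mem ⟨m, hub⟩)
  · exact fun k => ⟨k + 1, Nat.succ_pos k,
      no_small_lettering (k + 1) k (Nat.lt_succ_self k)⟩
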